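/- For a (right) skew brace (B, ·, ∘), the following are equivalent: (1) B is a bi-skew brace, i.e. (B, ∘, ·) is also a skew brace; (2) the gamma function is an anti-homomorphism of (B, ·) into Aut(B, ·), i.e. γ(y · z) = γ(z) γ(y) for all y, z ∈ B (apply γ(z) first); (3) for all x, y, z ∈ B, x⁻¹ · γ(y·z)(x) = x⁻¹ · γ(y)(γ(z)(x)). -/

import Mathlib

/-- A (right) skew brace: `(B, ·)` (the ambient group structure) and `(B, ∘)`
(given by `circ`, with unit `cone` and inverse `cinv`) are groups, related by
`((y · z) ∘ x) · x⁻¹ = ((y ∘ x) · x⁻¹) · ((z ∘ x) · x⁻¹)`. -/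
structure RightSkewBrace (B : Type*) [Group B] where
  circ : B → B → B
  circ_assoc : ∀ x y z : B, circ (circ x y) z = circ x (circ y z)
  cone : B
  cone_circ : ∀ x : B, circ cone x = x
  circ_cone : ∀ x : B, circ x cone = x
  cinv : B → B
  cinv_circ : ∀ x : B, circ (cinv x) x = cone
  circ_cinv : ∀ x : B, circ x (cinv x) = cone
  compat : ∀ x y z : B,
    circ (y * z) x * x⁻¹ = (circ y x * x⁻¹) * (circ z x * x⁻¹)

namespace RightSkewBrace

variable {B : Type*} [Group B]

/-- The gamma function: `γ(x)(y) = (y ∘ x) · x⁻¹`. -/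
def gamma (S : RightSkewBrace B) (x y : B) : B := S.circ y x * x⁻¹

/-- The star commutator: `x * y = x⁻¹ · (x ∘ y) · y⁻¹`. -/
def star (S : RightSkewBrace B) (x y : B) : B := x⁻¹ * S.circ x y * y⁻¹

/-- The commutator `[a, b] = a⁻¹ b⁻¹ a b` in the additive group `(B, ·)`. -/
def comm (a b : B) : B := a⁻¹ * b⁻¹ * a * b

/-- Membership in the annihilator `Ann(B) = Z(B,·) ∩ ker γ ∩ C_B(γ(B))`. -/
def inAnn (S : RightSkewBrace B) (c : B) : Prop :=
  (∀ x : B, c * x = x * c) ∧ (∀ y : B, S.gamma c y = y) ∧ (∀ y : B, S.gamma y c = c)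

/-- Membership in `B' = [B,B] · [B, γ(B)]`, the subgroup of `(B,·)` generated by
all additive commutators and all star commutators. -/
def inDerived (S : RightSkewBrace B) (x : B) : Prop :=
  x ∈ Subgroup.closure { z : B | ∃ a b : B, z = comm a b ∨ z = S.star a b }

/-- `B` is a bi-skew brace: `(B, ∘, ·)` is also a (right) skew brace, i.e. the
skew brace compatibility holds with the roles of the operations exchanged. -/
def IsBiSkew (S : RightSkewBrace B) : Prop :=
  ∀ x y z : B, S.circ (S.circ y z * x) (S.cinv x) =
    S.circ (S.circ (y * x) (S.cinv x)) (S.circ (z * x) (S.cinv x))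

/-- `B` is λ-homomorphic: `γ : (B, ·) → Aut(B, ·)` is a homomorphism,
`γ(x·y) = γ(x)γ(y)` (apply `γ(x)` first, maps acting on the right). -/
def IsLambdaHom (S : RightSkewBrace B) : Prop :=
  ∀ x y z : B, S.gamma (x * y) z = S.gamma y (S.gamma x z)

/-- `B` is inner: every `γ(y)` is an inner automorphism of `(B, ·)`. -/
def IsInner (S : RightSkewBrace B) : Prop :=
  ∀ y : B, ∃ t : B, ∀ x : B, S.gamma y x = t⁻¹ * x * t

end RightSkewBrace

open RightSkewBrace

/-- An isoclinism of skew braces, phrased on representatives: `xi` induces a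
skew brace isomorphism `B₁/Ann(B₁) → B₂/Ann(B₂)`, `theta` restricts to a skew
brace isomorphism `B₁' → B₂'`, and the pair is compatible with the additive
commutator map and the star commutator map. -/
structure Isoclinism {B₁ B₂ : Type*} [Group B₁] [Group B₂]
    (S₁ : RightSkewBrace B₁) (S₂ : RightSkewBrace B₂) where
  xi : B₁ → B₂
  theta : B₁ → B₂
  xi_surj : ∀ u : B₂, ∃ x : B₁, S₂.inAnn (u⁻¹ * xi x)
  xi_inj : ∀ x y : B₁, S₂.inAnn ((xi x)⁻¹ * xi y) → S₁.inAnn (x⁻¹ * y)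
  xi_congr : ∀ x y : B₁, S₁.inAnn (x⁻¹ * y) → S₂.inAnn ((xi x)⁻¹ * xi y)
  xi_mul : ∀ x y : B₁, S₂.inAnn ((xi (x * y))⁻¹ * (xi x * xi y))
  xi_circ : ∀ x y : B₁, S₂.inAnn ((xi (S₁.circ x y))⁻¹ * S₂.circ (xi x) (xi y))
  theta_maps : ∀ x : B₁, S₁.inDerived x → S₂.inDerived (theta x)
  theta_mul : ∀ x y : B₁, S₁.inDerived x → S₁.inDerived y →
    theta (x * y) = theta x * theta y
  theta_circ : ∀ x y : B₁, S₁.inDerived x → S₁.inDerived y →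
    theta (S₁.circ x y) = S₂.circ (theta x) (theta y)
  theta_inj : ∀ x y : B₁, S₁.inDerived x → S₁.inDerived y → theta x = theta y → x = y
  theta_surj : ∀ u : B₂, S₂.inDerived u → ∃ x : B₁, S₁.inDerived x ∧ theta x = u
  comm_comm : ∀ x y : B₁, theta (comm x y) = comm (xi x) (xi y)
  star_comm : ∀ x y : B₁, theta (S₁.star x y) = S₂.star (xi x) (xi y)

namespace RightSkewBrace
section Aux

variable {B : Type*} [Group B] (S : RightSkewBrace B)

lemma gamma_mul (x y z : B) : S.gamma x (y * z) = S.gamma x y * S.gamma x z :=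
  S.compat x y z

lemma cone_eq_one : S.cone = (1 : B) := by
  have h1 : ∀ x : B, S.circ 1 x = x := by
    intro x
    have h := S.compat x 1 1
    rw [one_mul] at h
    have : S.circ 1 x * x⁻¹ = 1 := mul_eq_right.mp h.symm
    exact (mul_inv_eq_one.mp this)
  have := h1 S.cone
  rw [S.circ_cone 1] at this
  exact this.symm

lemma gamma_one_apply (y : B) : S.gamma 1 y = y := by
  have : S.circ y 1 = y := by
    rw [← S.cone_eq_one]; exact S.circ_cone y
  simp [RightSkewBrace.gamma, this]

lemma gamma_apply_one (x : B) : S.gamma x 1 = 1 := by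
  have h := S.gamma_mul x 1 1
  rw [one_mul] at h
  exact (mul_eq_right.mp h.symm)

lemma gamma_inv (x y : B) : S.gamma x y⁻¹ = (S.gamma x y)⁻¹ := by
  have h := S.gamma_mul x y y⁻¹
  rw [mul_inv_cancel, S.gamma_apply_one] at h
  exact (inv_eq_of_mul_eq_one_right h.symm).symm

lemma circ_eq (x y : B) : S.circ y x = S.gamma x y * x := by
  simp [RightSkewBrace.gamma]

lemma gamma_circ (x y b : B) : S.gamma (S.circ x y) b = S.gamma y (S.gamma x b) := by
  have h1 : S.gamma (S.circ x y) b = S.circ b (S.circ x y) * (S.circ x y)⁻¹ := rfl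
  have h2 : S.circ x y = S.gamma y x * y := S.circ_eq y x
  rw [h1, ← S.circ_assoc, h2, mul_inv_rev]
  have h3 : S.circ (S.circ b x) y = S.gamma y (S.circ b x) * y := S.circ_eq y (S.circ b x)
  rw [h3]
  have : S.gamma y (S.circ b x) * y * (y⁻¹ * (S.gamma y x)⁻¹)
      = S.gamma y (S.circ b x) * (S.gamma y x)⁻¹ := by group
  rw [this, ← S.gamma_inv, ← S.gamma_mul]
  rfl

lemma gamma_cinv_gamma (x b : B) : S.gamma (S.cinv x) (S.gamma x b) = b := by
  rw [← S.gamma_circ, S.circ_cinv, S.cone_eq_one, S.gamma_one_apply]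

lemma gamma_gamma_cinv (x b : B) : S.gamma x (S.gamma (S.cinv x) b) = b := by
  rw [← S.gamma_circ, S.cinv_circ, S.cone_eq_one, S.gamma_one_apply]

lemma mul_eq (x y : B) : y * x = S.circ (S.gamma (S.cinv x) y) x := by
  rw [S.circ_eq, S.gamma_gamma_cinv]

lemma delta_eq (x z : B) : S.circ (z * x) (S.cinv x) = S.gamma (S.cinv x) z := by
  rw [S.mul_eq x z, S.circ_assoc, S.circ_cinv, S.circ_cone]

lemma cinv_cinv (x : B) : S.cinv (S.cinv x) = x := by
  have : S.circ (S.cinv (S.cinv x)) (S.circ (S.cinv x) x) = x := by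
    rw [← S.circ_assoc, S.cinv_circ, S.cone_circ]
  rwa [S.cinv_circ, S.circ_cone] at this

/-- The common condition: `γ(γ(a)(z)) = γ(a) γ(z) γ(a)⁻¹`. -/
def CondC : Prop :=
  ∀ a z y : B, S.gamma (S.gamma a z) (S.gamma a y) = S.gamma a (S.gamma z y)

lemma biskew_iff_condC : S.IsBiSkew ↔ S.CondC := by
  constructor
  · intro h a z y
    have hb := h (S.cinv a) y z
    rw [S.delta_eq, S.delta_eq, S.delta_eq, S.cinv_cinv] at hb
    rw [S.circ_eq, S.gamma_mul, S.circ_eq] at hb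
    exact (mul_right_cancel hb).symm
  · intro h x y z
    rw [S.delta_eq, S.delta_eq, S.delta_eq]
    rw [S.circ_eq, S.gamma_mul, S.circ_eq, h]

lemma antihom_iff_condC :
    (∀ y z w : B, S.gamma (y * z) w = S.gamma y (S.gamma z w)) ↔ S.CondC := by
  constructor
  · intro h a z y
    have := h (S.gamma a z) a y
    rw [S.mul_eq a (S.gamma a z), S.gamma_cinv_gamma, S.gamma_circ] at this
    exact this.symm
  · intro h y z w
    rw [S.mul_eq z y, S.gamma_circ, ← h z (S.gamma (S.cinv z) y) w, S.gamma_gamma_cinv]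

end Aux
end RightSkewBrace

/-- for a right skew brace the following are equivalent:
(1) it is a bi-skew brace; (2) `γ` is an anti-homomorphism of `(B, ·)`,
`γ(y·z) = γ(z) γ(y)` (apply `γ(z)` first); (3) `x⁻¹·γ(y·z)(x) = x⁻¹·γ(y)(γ(z)(x))`
for all `x, y, z`. -/
theorem biSkew_tfae {B : Type*} [Group B] (S : RightSkewBrace B) :
    List.TFAE
      [ S.IsBiSkew,
        ∀ y z w : B, S.gamma (y * z) w = S.gamma y (S.gamma z w),
        ∀ x y z : B, x⁻¹ * S.gamma (y * z) x = x⁻¹ * S.gamma y (S.gamma z x) ] := by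
  tfae_have 1 ↔ 2 := (S.biskew_iff_condC).trans (S.antihom_iff_condC).symm
  tfae_have 2 → 3 := fun h x y z => by rw [h]
  tfae_have 3 → 2 := fun h y z w => mul_left_cancel (h w y z)
  tfae_finish
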